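/- arXiv:2010.11469 — 7 statements merged into one kernel-verified Lean document; each statement's English description precedes it below -/
import Mathlib

section
/- Let G be a finite group, a ∈ G \ Z(G), and suppose nacent(G) = {G, C(a)}. Then for every s ∈ C(a) \ Z(G), the centralizer C(s) is contained in C(a). -/
open Subgroup

/-- `Cent(G)`: the set of element centralizers of `G`. -/
def elemCentralizers (G : Type*) [Group G] : Set (Subgroup G) :=
  {H | ∃ x : G, H = Subgroup.centralizer {x}}

/-- `nacent(G)`: the set of non-abelian element centralizers of `G`. -/
def nacent (G : Type*) [Group G] : Set (Subgroup G) :=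
  {H | H ∈ elemCentralizers G ∧ ¬ IsMulCommutative H}

/-- A group is a CA-group if the centralizer of every non-central element is abelian. -/
def IsCAGroup (H : Type*) [Group H] : Prop :=
  ∀ h : H, h ∉ Subgroup.center H → IsMulCommutative (Subgroup.centralizer {h} : Subgroup H)

/-- The Hughes subgroup `H_p(K)`, generated by the elements of order `≠ p`. -/
def hughesSubgroup (p : ℕ) (K : Type*) [Group K] : Subgroup K :=
  Subgroup.closure {x : K | orderOf x ≠ p}

/-- The conjugate `g H g⁻¹` of a subgroup. -/
def conjSubgroup {F : Type*} [Group F] (g : F) (H : Subgroup F) : Subgroup F :=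
  H.map (MulAut.conj g).toMonoidHom

/-- `F` is a Frobenius group with kernel `N` and complement `H`. -/
def IsFrobeniusWithKernel {F : Type*} [Group F] (N H : Subgroup F) : Prop :=
  N.Normal ∧ N ⊓ H = ⊥ ∧ N ⊔ H = ⊤ ∧ N ≠ ⊥ ∧ H ≠ ⊥ ∧
    ∀ g : F, g ∉ H → H ⊓ conjSubgroup g H = ⊥

/-- `F` is a Frobenius group with complement `H`. -/
def IsFrobeniusWithComplement {F : Type*} [Group F] (H : Subgroup F) : Prop :=
  H ≠ ⊥ ∧ H ≠ ⊤ ∧ ∀ g : F, g ∉ H → H ⊓ conjSubgroup g H = ⊥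

theorem stmt_1 {G : Type*} [Group G] [Finite G] (a : G)
    (ha : a ∉ Subgroup.center G)
    (hna : nacent G = {⊤, Subgroup.centralizer {a}})
    (hpr : Subgroup.centralizer {a} ≠ (⊤ : Subgroup G)) :
    ∀ s : G, s ∈ Subgroup.centralizer ({a} : Set G) → s ∉ Subgroup.center G →
      Subgroup.centralizer {s} ≤ Subgroup.centralizer ({a} : Set G) := by
  intro s hs hsZ
  by_cases hc : IsMulCommutative (Subgroup.centralizer ({s} : Set G))
  · have has : a ∈ Subgroup.centralizer ({s} : Set G) := by
      rw [Subgroup.mem_centralizer_iff] at hs ⊢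
      intro g hg
      rw [Set.mem_singleton_iff] at hg; subst hg
      exact (hs a rfl).symm
    intro x hx
    rw [Subgroup.mem_centralizer_iff]
    intro g hg
    rw [Set.mem_singleton_iff] at hg
    rw [hg]
    have := hc.is_comm.comm (⟨x, hx⟩ : Subgroup.centralizer ({s} : Set G)) ⟨a, has⟩
    exact (Subtype.ext_iff.mp this).symm
  · have hmem : Subgroup.centralizer ({s} : Set G) ∈ nacent G := ⟨⟨s, rfl⟩, hc⟩
    rw [hna] at hmem
    rcases hmem with h | h
    · exfalso
      apply hsZ
      rw [Subgroup.mem_center_iff]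
      intro g
      have hg : g ∈ Subgroup.centralizer ({s} : Set G) := h ▸ Subgroup.mem_top g
      exact (Subgroup.mem_centralizer_iff.mp hg s rfl).symm
    · exact h.le
end

section
/- Let G be a finite group, a ∈ G \ Z(G), and suppose nacent(G) = {G, C(a)}. Then for every x ∈ G \ C(a), C(a) ∩ C(x) = Z(G). -/
open Subgroup

theorem stmt_2 {G : Type*} [Group G] [Finite G] (a : G)
    (ha : a ∉ Subgroup.center G)
    (hna : nacent G = {⊤, Subgroup.centralizer {a}})
    (hpr : Subgroup.centralizer {a} ≠ (⊤ : Subgroup G)) :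
    ∀ x : G, x ∉ Subgroup.centralizer ({a} : Set G) →
      Subgroup.centralizer ({a} : Set G) ⊓ Subgroup.centralizer {x} =
        Subgroup.center G := by
  intro x hx
  apply le_antisymm
  · intro y hy
    rw [Subgroup.mem_inf] at hy
    obtain ⟨hya, hyx⟩ := hy
    rw [Subgroup.mem_centralizer_singleton_iff] at hya hyx
    by_contra hyc
    have hay : a ∈ Subgroup.centralizer ({y} : Set G) := by
      rw [Subgroup.mem_centralizer_singleton_iff]; exact hya.symm
    have hxy : x ∈ Subgroup.centralizer ({y} : Set G) := by
      rw [Subgroup.mem_centralizer_singleton_iff]; exact hyx.symm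
    by_cases hc : IsMulCommutative (Subgroup.centralizer ({y} : Set G))
    · have : a * x = x * a := Subgroup.mul_comm_of_mem_isMulCommutative (H := Subgroup.centralizer ({y} : Set G)) hay hxy
      exact hx (by rw [Subgroup.mem_centralizer_singleton_iff]; exact this.symm)
    · have hmem : Subgroup.centralizer ({y} : Set G) ∈ nacent G := ⟨⟨y, rfl⟩, hc⟩
      rw [hna] at hmem
      rcases hmem with h | h
      · apply hyc
        rw [Subgroup.mem_center_iff]
        intro g
        have : g ∈ Subgroup.centralizer ({y} : Set G) := h ▸ Subgroup.mem_top g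
        rwa [Subgroup.mem_centralizer_singleton_iff] at this
      · exact hx (h ▸ hxy)
  · exact le_inf (Subgroup.center_le_centralizer _) (Subgroup.center_le_centralizer _)
end

section
/- Let G be a finite group, a ∈ G \ Z(G), and suppose nacent(G) = {G, C(a)}. Then for any x, y ∈ G \ C(a), either C(x) = C(y) or C(x) ∩ C(y) = Z(G). -/
open Subgroup

section Aux
variable {G : Type*} [Group G]

private lemma cent_symm {x z : G} (h : z ∈ Subgroup.centralizer ({x} : Set G)) :
    x ∈ Subgroup.centralizer ({z} : Set G) := by
  rw [Subgroup.mem_centralizer_singleton_iff] at h ⊢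
  exact h.symm

private lemma abelian_cent_le {x z : G}
    (hc : IsMulCommutative (Subgroup.centralizer ({x} : Set G)))
    (hz : z ∈ Subgroup.centralizer ({x} : Set G)) :
    Subgroup.centralizer ({x} : Set G) ≤ Subgroup.centralizer ({z} : Set G) := by
  intro u hu
  rw [Subgroup.mem_centralizer_singleton_iff]
  have := hc.is_comm.comm ⟨z, hz⟩ ⟨u, hu⟩
  exact (congrArg Subtype.val this).symm

private lemma abelian_cent {a : G}
    (hna : nacent G = {⊤, Subgroup.centralizer {a}}) {x : G}
    (hx : x ∉ Subgroup.centralizer ({a} : Set G)) :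
    IsMulCommutative (Subgroup.centralizer ({x} : Set G)) := by
  by_contra hnc
  have hmem : Subgroup.centralizer ({x} : Set G) ∈ nacent G := ⟨⟨x, rfl⟩, hnc⟩
  rw [hna] at hmem
  rcases hmem with h | h
  · have hself : x ∈ Subgroup.centralizer ({x} : Set G) := by
      rw [Subgroup.mem_centralizer_singleton_iff]
    have : a ∈ Subgroup.centralizer ({x} : Set G) := by
      rw [show Subgroup.centralizer ({x} : Set G) = ⊤ from h]; trivial
    exact hx (cent_symm this)
  · have : a ∈ Subgroup.centralizer ({x} : Set G) := by
      rw [show Subgroup.centralizer ({x} : Set G) = Subgroup.centralizer {a} from h,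
        Subgroup.mem_centralizer_singleton_iff]
    exact hx (cent_symm this)

end Aux

theorem stmt_3 {G : Type*} [Group G] [Finite G] (a : G)
    (ha : a ∉ Subgroup.center G)
    (hna : nacent G = {⊤, Subgroup.centralizer {a}})
    (hpr : Subgroup.centralizer {a} ≠ (⊤ : Subgroup G)) :
    ∀ x y : G, x ∉ Subgroup.centralizer ({a} : Set G) →
      y ∉ Subgroup.centralizer ({a} : Set G) →
      Subgroup.centralizer {x} = Subgroup.centralizer {y} ∨
        Subgroup.centralizer {x} ⊓ Subgroup.centralizer {y} = Subgroup.center G := by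
  intro x y hx hy
  by_cases hxy : Subgroup.centralizer ({x} : Set G) = Subgroup.centralizer ({y} : Set G)
  · exact Or.inl hxy
  right
  apply le_antisymm
  · intro z hz
    rcases hz with ⟨hzx, hzy⟩
    by_contra hzc
    -- C(z) is abelian
    have hzca : IsMulCommutative (Subgroup.centralizer ({z} : Set G)) := by
      by_contra hnc
      have hmem : Subgroup.centralizer ({z} : Set G) ∈ nacent G := ⟨⟨z, rfl⟩, hnc⟩
      rw [hna] at hmem
      rcases hmem with h | h
      · exact hzc (by rwa [Subgroup.centralizer_eq_top_iff_subset,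
          Set.singleton_subset_iff, SetLike.mem_coe] at h)
      · have hxz' : x ∈ Subgroup.centralizer ({z} : Set G) := cent_symm hzx
        rw [show Subgroup.centralizer ({z} : Set G) = Subgroup.centralizer {a} from h] at hxz'
        exact hx hxz'
    have hxz : x ∈ Subgroup.centralizer ({z} : Set G) := cent_symm hzx
    have hyz : y ∈ Subgroup.centralizer ({z} : Set G) := cent_symm hzy
    have h1 : Subgroup.centralizer ({x} : Set G) = Subgroup.centralizer ({z} : Set G) :=
      le_antisymm (abelian_cent_le (abelian_cent hna hx) hzx) (abelian_cent_le hzca hxz)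
    have h2 : Subgroup.centralizer ({y} : Set G) = Subgroup.centralizer ({z} : Set G) :=
      le_antisymm (abelian_cent_le (abelian_cent hna hy) hzy) (abelian_cent_le hzca hyz)
    exact hxy (h1.trans h2.symm)
  · exact le_inf (Subgroup.center_le_centralizer _) (Subgroup.center_le_centralizer _)
end

section
/- Let G be a finite group, a ∈ G \ Z(G), and suppose nacent(G) = {G, C(a)}. Then the collection Π = {C(a)/Z(G)} ∪ {C(x)/Z(G) : x ∈ G \ C(a)} is a non-trivial normal partition of G/Z(G): every member of Π is a non-trivial proper subgroup of G/Z(G), every non-identity element of G/Z(G) lies in exactly one member of Π, Π has more than one member, and Π is closed under conjugation by elements of G/Z(G). -/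
open Subgroup

section AuxLemmas
variable {G : Type*} [Group G]

lemma self_mem_centralizer (x : G) : x ∈ centralizer ({x} : Set G) :=
  mem_centralizer_singleton_iff.2 rfl

lemma centralizer_eq_top_iff {x : G} :
    centralizer ({x} : Set G) = ⊤ ↔ x ∈ center G := by
  rw [centralizer_eq_top_iff_subset, Set.singleton_subset_iff]; rfl

lemma conj_centralizer (g x : G) :
    conjSubgroup g (centralizer ({x} : Set G)) = centralizer ({g * x * g⁻¹} : Set G) := by
  ext y
  constructor
  · rintro ⟨z, hz, rfl⟩
    have hz' := mem_centralizer_singleton_iff.1 hz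
    simp only [MulEquiv.coe_toMonoidHom, MulAut.conj_apply]
    refine mem_centralizer_singleton_iff.2 ?_
    calc g * z * g⁻¹ * (g * x * g⁻¹) = g * (z * x) * g⁻¹ := by group
      _ = g * (x * z) * g⁻¹ := by rw [hz']
      _ = g * x * g⁻¹ * (g * z * g⁻¹) := by group
  · intro hy
    have hy' := mem_centralizer_singleton_iff.1 hy
    refine ⟨g⁻¹ * y * g, mem_centralizer_singleton_iff.2 ?_, by
      simp [MulAut.conj_apply]; group⟩
    have : y * (g * x * g⁻¹) = (g * x * g⁻¹) * y := hy'
    have h2 : g⁻¹ * (y * (g * x * g⁻¹)) * g = g⁻¹ * ((g * x * g⁻¹) * y) * g := by rw [this]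
    calc g⁻¹ * y * g * x = g⁻¹ * (y * (g * x * g⁻¹)) * g := by group
      _ = g⁻¹ * ((g * x * g⁻¹) * y) * g := h2
      _ = x * (g⁻¹ * y * g) := by group

lemma conjSubgroup_isCommutative {H : Subgroup G} (hH : IsMulCommutative H) (g : G) :
    IsMulCommutative (conjSubgroup g H) := by
  unfold conjSubgroup
  exact @Subgroup.map_isMulCommutative _ _ _ _ H _ hH

lemma abelian_centralizer_le {x y : G}
    (hx : IsMulCommutative (centralizer ({x} : Set G)))
    (hy : y ∈ centralizer ({x} : Set G)) :
    centralizer ({x} : Set G) ≤ centralizer ({y} : Set G) := by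
  intro z hz
  refine mem_centralizer_singleton_iff.2 ?_
  have := hx.is_comm.comm ⟨z, hz⟩ ⟨y, hy⟩
  exact congrArg Subtype.val this

end AuxLemmas

section QuotAux
variable {G : Type*} [Group G] (N : Subgroup G) [N.Normal]

lemma mk'_eq_one_iff {y : G} : (QuotientGroup.mk' N) y = 1 ↔ y ∈ N := by
  rw [← MonoidHom.mem_ker, QuotientGroup.ker_mk']

lemma mem_map_mk'_iff {H : Subgroup G} (hN : N ≤ H) {y : G} :
    (QuotientGroup.mk' N) y ∈ H.map (QuotientGroup.mk' N) ↔ y ∈ H := by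
  constructor
  · rintro ⟨h, hh, he⟩
    obtain ⟨z, hz, rfl⟩ := (QuotientGroup.mk'_eq_mk' N).1 he
    exact H.mul_mem hh (hN hz)
  · exact fun h => Subgroup.mem_map_of_mem _ h

lemma map_mk'_eq_top_iff {H : Subgroup G} (hN : N ≤ H) :
    H.map (QuotientGroup.mk' N) = ⊤ ↔ H = ⊤ := by
  constructor
  · intro h
    rw [eq_top_iff']
    intro x
    have : (QuotientGroup.mk' N) x ∈ H.map (QuotientGroup.mk' N) := by rw [h]; trivial
    exact (mem_map_mk'_iff N hN).1 this
  · rintro rfl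
    rw [← MonoidHom.range_eq_map,
      MonoidHom.range_eq_top_of_surjective _ (QuotientGroup.mk'_surjective N)]

lemma map_mk'_inj {H K : Subgroup G} (hH : N ≤ H) (hK : N ≤ K)
    (h : H.map (QuotientGroup.mk' N) = K.map (QuotientGroup.mk' N)) : H = K := by
  ext x
  rw [← mem_map_mk'_iff N hH, ← mem_map_mk'_iff N hK, h]

lemma conjSubgroup_map_mk' (g : G) (H : Subgroup G) :
    conjSubgroup ((QuotientGroup.mk' N) g) (H.map (QuotientGroup.mk' N)) =
      (conjSubgroup g H).map (QuotientGroup.mk' N) := by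
  unfold conjSubgroup
  rw [Subgroup.map_map, Subgroup.map_map]
  congr 1

end QuotAux

section KeyLemmas
variable {G : Type*} [Group G] {a : G}

lemma Ca_not_comm (hna : nacent G = {⊤, centralizer ({a} : Set G)}) :
    ¬ IsMulCommutative (centralizer ({a} : Set G)) := by
  have : centralizer ({a} : Set G) ∈ nacent G := by
    rw [hna]; exact Set.mem_insert_iff.2 (Or.inr rfl)
  exact this.2

lemma key_nacent (hna : nacent G = {⊤, centralizer ({a} : Set G)}) {x : G}
    (h : ¬ IsMulCommutative (centralizer ({x} : Set G))) :
    centralizer ({x} : Set G) = ⊤ ∨ centralizer ({x} : Set G) = centralizer ({a} : Set G) := by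
  have hx : centralizer ({x} : Set G) ∈ nacent G := ⟨⟨x, rfl⟩, h⟩
  rw [hna] at hx
  simpa using hx

lemma conj_Ca (ha : a ∉ center G) (hna : nacent G = {⊤, centralizer ({a} : Set G)}) (g : G) :
    centralizer ({g * a * g⁻¹} : Set G) = centralizer ({a} : Set G) := by
  have hb : g * a * g⁻¹ ∉ center G := by
    intro h
    have hc := (Subgroup.center G).normal_of_characteristic.conj_mem _ h g⁻¹
    have e : g⁻¹ * (g * a * g⁻¹) * g⁻¹⁻¹ = a := by group
    rw [e] at hc
    exact ha hc
  have hnc : ¬ IsMulCommutative (centralizer ({g * a * g⁻¹} : Set G)) := by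
    intro hcomm
    have h2 := conjSubgroup_isCommutative hcomm g⁻¹
    rw [conj_centralizer] at h2
    have e : g⁻¹ * (g * a * g⁻¹) * g⁻¹⁻¹ = a := by group
    rw [e] at h2
    exact Ca_not_comm hna h2
  rcases key_nacent hna hnc with h | h
  · exact absurd (centralizer_eq_top_iff.1 h) hb
  · exact h

lemma notCa_not_center {x : G} (hx : x ∉ centralizer ({a} : Set G)) : x ∉ center G :=
  fun h => hx (center_le_centralizer _ h)

lemma notCa_comm (hna : nacent G = {⊤, centralizer ({a} : Set G)}) {x : G}
    (hx : x ∉ centralizer ({a} : Set G)) :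
    IsMulCommutative (centralizer ({x} : Set G)) := by
  by_contra h
  rcases key_nacent hna h with h1 | h1
  · exact notCa_not_center hx (centralizer_eq_top_iff.1 h1)
  · exact hx (h1 ▸ self_mem_centralizer x)

lemma inter_center (hna : nacent G = {⊤, centralizer ({a} : Set G)}) {x y : G}
    (hx : x ∉ centralizer ({a} : Set G))
    (hya : y ∈ centralizer ({a} : Set G)) (hyx : y ∈ centralizer ({x} : Set G)) :
    y ∈ center G := by
  by_contra hy
  have hay : a ∈ centralizer ({y} : Set G) :=
    mem_centralizer_singleton_iff.2 (mem_centralizer_singleton_iff.1 hya).symm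
  have hxy : x ∈ centralizer ({y} : Set G) :=
    mem_centralizer_singleton_iff.2 (mem_centralizer_singleton_iff.1 hyx).symm
  by_cases hc : IsMulCommutative (centralizer ({y} : Set G))
  · have hcom : x * a = a * x := congrArg Subtype.val (hc.is_comm.comm ⟨x, hxy⟩ ⟨a, hay⟩)
    exact hx (mem_centralizer_singleton_iff.2 hcom)
  · rcases key_nacent hna hc with h1 | h1
    · exact hy (centralizer_eq_top_iff.1 h1)
    · exact hx (h1 ▸ hxy)

lemma same_class (hna : nacent G = {⊤, centralizer ({a} : Set G)}) {x x' y : G}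
    (hx : x ∉ centralizer ({a} : Set G)) (hx' : x' ∉ centralizer ({a} : Set G))
    (h1 : y ∈ centralizer ({x} : Set G)) (h2 : y ∈ centralizer ({x'} : Set G))
    (hy : y ∉ center G) :
    centralizer ({x} : Set G) = centralizer ({x'} : Set G) := by
  have hxy : x ∈ centralizer ({y} : Set G) :=
    mem_centralizer_singleton_iff.2 (mem_centralizer_singleton_iff.1 h1).symm
  have hx'y : x' ∈ centralizer ({y} : Set G) :=
    mem_centralizer_singleton_iff.2 (mem_centralizer_singleton_iff.1 h2).symm
  have hCy_comm : IsMulCommutative (centralizer ({y} : Set G)) := by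
    by_contra hc
    rcases key_nacent hna hc with h | h
    · exact hy (centralizer_eq_top_iff.1 h)
    · exact hx (h ▸ hxy)
  have e1 : centralizer ({x} : Set G) = centralizer ({y} : Set G) :=
    le_antisymm (abelian_centralizer_le (notCa_comm hna hx) h1)
      (abelian_centralizer_le hCy_comm hxy)
  have e2 : centralizer ({x'} : Set G) = centralizer ({y} : Set G) :=
    le_antisymm (abelian_centralizer_le (notCa_comm hna hx') h2)
      (abelian_centralizer_le hCy_comm hx'y)
  rw [e1, e2]

lemma conj_notCa (ha : a ∉ center G) (hna : nacent G = {⊤, centralizer ({a} : Set G)})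
    {x : G} (hx : x ∉ centralizer ({a} : Set G)) (g : G) :
    g * x * g⁻¹ ∉ centralizer ({a} : Set G) := by
  intro hmem
  have h := mem_centralizer_singleton_iff.1 hmem
  have hb : x * (g⁻¹ * a * g) = (g⁻¹ * a * g) * x := by
    calc x * (g⁻¹ * a * g) = g⁻¹ * (g * x * g⁻¹ * a) * g := by group
      _ = g⁻¹ * (a * (g * x * g⁻¹)) * g := by rw [h]
      _ = (g⁻¹ * a * g) * x := by group
  have hbmem : g⁻¹ * a * g ∈ centralizer ({x} : Set G) := mem_centralizer_singleton_iff.2 hb.symm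
  have hC : centralizer ({g⁻¹ * a * g} : Set G) = centralizer ({a} : Set G) := by
    have h2 := conj_Ca ha hna g⁻¹
    rwa [inv_inv] at h2
  have h3 := abelian_centralizer_le (notCa_comm hna hx) hbmem (self_mem_centralizer x)
  rw [hC] at h3
  exact hx h3

end KeyLemmas

theorem stmt_4 {G : Type*} [Group G] [Finite G] (a : G)
    (ha : a ∉ Subgroup.center G)
    (hna : nacent G = {⊤, Subgroup.centralizer {a}})
    (hpr : Subgroup.centralizer {a} ≠ (⊤ : Subgroup G)) :
    ∀ Pi : Set (Subgroup (G ⧸ Subgroup.center G)),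
      Pi = insert
          ((Subgroup.centralizer ({a} : Set G)).map (QuotientGroup.mk' (Subgroup.center G)))
          {H | ∃ x : G, x ∉ Subgroup.centralizer ({a} : Set G) ∧
            H = (Subgroup.centralizer ({x} : Set G)).map (QuotientGroup.mk' (Subgroup.center G))} →
      (∀ H ∈ Pi, H ≠ ⊥ ∧ H ≠ ⊤) ∧
      (∀ g : G ⧸ Subgroup.center G, g ≠ 1 → ∃! H : Subgroup (G ⧸ Subgroup.center G),
        H ∈ Pi ∧ g ∈ H) ∧
      (∃ H ∈ Pi, ∃ K ∈ Pi, H ≠ K) ∧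
      (∀ H ∈ Pi, ∀ g : G ⧸ Subgroup.center G, conjSubgroup g H ∈ Pi) := by
  
  intro Pi hPi
  subst hPi
  have hZle : ∀ x : G, center G ≤ centralizer ({x} : Set G) :=
    fun x => center_le_centralizer _
  refine ⟨?_, ?_, ?_, ?_⟩
  · -- nontrivial proper
    intro H hH
    rcases Set.mem_insert_iff.1 hH with rfl | ⟨x, hx, rfl⟩
    · constructor
      · intro hbot
        have hmem := (mem_map_mk'_iff _ (hZle a)).2 (self_mem_centralizer a)
        rw [hbot, Subgroup.mem_bot] at hmem
        exact ha ((mk'_eq_one_iff _).1 hmem)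
      · intro htop
        exact hpr ((map_mk'_eq_top_iff _ (hZle a)).1 htop)
    · constructor
      · intro hbot
        have hmem := (mem_map_mk'_iff _ (hZle x)).2 (self_mem_centralizer x)
        rw [hbot, Subgroup.mem_bot] at hmem
        exact notCa_not_center hx ((mk'_eq_one_iff _).1 hmem)
      · intro htop
        exact notCa_not_center hx
          (centralizer_eq_top_iff.1 ((map_mk'_eq_top_iff _ (hZle x)).1 htop))
  · -- unique membership
    intro g hg
    obtain ⟨y, rfl⟩ := QuotientGroup.mk'_surjective (center G) g
    have hy : y ∉ center G := fun h => hg ((mk'_eq_one_iff _).2 h)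
    by_cases hyC : y ∈ centralizer ({a} : Set G)
    · refine ⟨(centralizer ({a} : Set G)).map (QuotientGroup.mk' (center G)),
        ⟨Set.mem_insert _ _, (mem_map_mk'_iff _ (hZle a)).2 hyC⟩, ?_⟩
      rintro K ⟨hK, hgK⟩
      rcases Set.mem_insert_iff.1 hK with rfl | ⟨x, hx, rfl⟩
      · rfl
      · have hyx : y ∈ centralizer ({x} : Set G) := (mem_map_mk'_iff _ (hZle x)).1 hgK
        exact absurd (inter_center hna hx hyC hyx) hy
    · refine ⟨(centralizer ({y} : Set G)).map (QuotientGroup.mk' (center G)),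
        ⟨Set.mem_insert_iff.2 (Or.inr ⟨y, hyC, rfl⟩),
          (mem_map_mk'_iff _ (hZle y)).2 (self_mem_centralizer y)⟩, ?_⟩
      rintro K ⟨hK, hgK⟩
      rcases Set.mem_insert_iff.1 hK with rfl | ⟨x, hx, rfl⟩
      · exact absurd ((mem_map_mk'_iff _ (hZle a)).1 hgK) hyC
      · have hyx : y ∈ centralizer ({x} : Set G) := (mem_map_mk'_iff _ (hZle x)).1 hgK
        have he := same_class hna hx hyC hyx (self_mem_centralizer y) hy
        rw [he]
  · -- more than one member
    have hex : ∃ x : G, x ∉ centralizer ({a} : Set G) := by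
      by_contra h
      push_neg at h
      exact hpr ((eq_top_iff' _).2 h)
    obtain ⟨x, hx⟩ := hex
    refine ⟨(centralizer ({a} : Set G)).map (QuotientGroup.mk' (center G)), Set.mem_insert _ _,
      (centralizer ({x} : Set G)).map (QuotientGroup.mk' (center G)),
      Set.mem_insert_iff.2 (Or.inr ⟨x, hx, rfl⟩), ?_⟩
    intro h
    have he := map_mk'_inj _ (hZle a) (hZle x) h
    exact hx (he ▸ self_mem_centralizer x)
  · -- conjugation closed
    intro H hH g
    obtain ⟨gb, rfl⟩ := QuotientGroup.mk'_surjective (center G) g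
    rcases Set.mem_insert_iff.1 hH with rfl | ⟨x, hx, rfl⟩
    · rw [conjSubgroup_map_mk', conj_centralizer, conj_Ca ha hna gb]
      exact Set.mem_insert _ _
    · rw [conjSubgroup_map_mk', conj_centralizer]
      exact Set.mem_insert_iff.2 (Or.inr ⟨gb * x * gb⁻¹, conj_notCa ha hna hx gb, rfl⟩)
end

section
/- Let G be a finite group, a ∈ G \ Z(G), and suppose nacent(G) = {G, C(a)}. Then C(a) is a normal subgroup of G. -/
open Subgroup

theorem stmt_5 {G : Type*} [Group G] [Finite G] (a : G)
    (ha : a ∉ Subgroup.center G)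
    (hna : nacent G = {⊤, Subgroup.centralizer {a}})
    (hpr : Subgroup.centralizer {a} ≠ (⊤ : Subgroup G)) :
    (Subgroup.centralizer ({a} : Set G)).Normal := by
  -- C(a) is non-abelian
  have hCa : Subgroup.centralizer ({a} : Set G) ∈ nacent G := by
    rw [hna]; right; rfl
  have hnc : ¬ IsMulCommutative (Subgroup.centralizer ({a} : Set G)) := hCa.2
  have key : ∀ g : G, Subgroup.centralizer ({g * a * g⁻¹} : Set G)
      = Subgroup.centralizer ({a} : Set G) := by
    intro g
    have hmem : Subgroup.centralizer ({g * a * g⁻¹} : Set G) ∈ nacent G := by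
      refine ⟨⟨g * a * g⁻¹, rfl⟩, ?_⟩
      intro hc
      apply hnc
      constructor
      constructor
      rintro ⟨x, hx⟩ ⟨y, hy⟩
      have hx' : g * x * g⁻¹ ∈ Subgroup.centralizer ({g * a * g⁻¹} : Set G) := by
        rw [Subgroup.mem_centralizer_singleton_iff]
        rw [Subgroup.mem_centralizer_singleton_iff] at hx
        calc (g * x * g⁻¹) * (g * a * g⁻¹) = g * (x * a) * g⁻¹ := by group
        _ = g * (a * x) * g⁻¹ := by rw [hx]
        _ = (g * a * g⁻¹) * (g * x * g⁻¹) := by group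
      have hy' : g * y * g⁻¹ ∈ Subgroup.centralizer ({g * a * g⁻¹} : Set G) := by
        rw [Subgroup.mem_centralizer_singleton_iff]
        rw [Subgroup.mem_centralizer_singleton_iff] at hy
        calc (g * y * g⁻¹) * (g * a * g⁻¹) = g * (y * a) * g⁻¹ := by group
        _ = g * (a * y) * g⁻¹ := by rw [hy]
        _ = (g * a * g⁻¹) * (g * y * g⁻¹) := by group
      have := hc.is_comm.comm ⟨_, hx'⟩ ⟨_, hy'⟩
      have h2 : (g * x * g⁻¹) * (g * y * g⁻¹) = (g * y * g⁻¹) * (g * x * g⁻¹) :=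
        congrArg Subtype.val this
      ext
      have : g * (x * y) * g⁻¹ = g * (y * x) * g⁻¹ := by
        calc g * (x * y) * g⁻¹ = (g * x * g⁻¹) * (g * y * g⁻¹) := by group
        _ = (g * y * g⁻¹) * (g * x * g⁻¹) := h2
        _ = g * (y * x) * g⁻¹ := by group
      simpa using mul_left_cancel (mul_right_cancel this)
    rw [hna] at hmem
    rcases hmem with h | h
    · exfalso
      apply ha
      rw [Subgroup.mem_center_iff]
      intro y
      have : g * y * g⁻¹ ∈ Subgroup.centralizer ({g * a * g⁻¹} : Set G) := by
        rw [h]; trivial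
      rw [Subgroup.mem_centralizer_singleton_iff] at this
      have h3 : g * (y * a) * g⁻¹ = g * (a * y) * g⁻¹ := by
        calc g * (y * a) * g⁻¹ = (g * y * g⁻¹) * (g * a * g⁻¹) := by group
        _ = (g * a * g⁻¹) * (g * y * g⁻¹) := this
        _ = g * (a * y) * g⁻¹ := by group
      exact mul_left_cancel (mul_right_cancel h3)
    · exact h
  constructor
  intro n hn g
  have := key g
  rw [← this, Subgroup.mem_centralizer_singleton_iff]
  rw [Subgroup.mem_centralizer_singleton_iff] at hn
  calc (g * n * g⁻¹) * (g * a * g⁻¹) = g * (n * a) * g⁻¹ := by group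
  _ = g * (a * n) * g⁻¹ := by rw [hn]
  _ = (g * a * g⁻¹) * (g * n * g⁻¹) := by group
end

section
/- Let G be a finite group, a ∈ G \ Z(G), with nacent(G) = {G, C(a)}, and suppose G/Z(G) = (C(a)/Z(G)) ⋊ (C(x)/Z(G)) is a Frobenius group with Frobenius kernel C(a)/Z(G) for some x ∈ G \ C(a). Then |Cent(G)| = |Cent(C(a))| + |C(a)/Z(G)| + 1. -/
open Subgroup

section AuxConj

variable {F : Type*} [Group F]

lemma mem_conjSubgroup {g m : F} {H : Subgroup F} :
    m ∈ conjSubgroup g H ↔ g⁻¹ * m * g ∈ H := by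
  simp only [conjSubgroup, Subgroup.mem_map, MulEquiv.coe_toMonoidHom, MulAut.conj_apply]
  constructor
  · rintro ⟨h, hh, rfl⟩; group; simpa using hh
  · intro h; exact ⟨g⁻¹ * m * g, h, by group⟩

lemma conjSubgroup_conjSubgroup (g g' : F) (H : Subgroup F) :
    conjSubgroup g (conjSubgroup g' H) = conjSubgroup (g * g') H := by
  ext m; simp only [mem_conjSubgroup]; group

lemma conjSubgroup_one (H : Subgroup F) : conjSubgroup 1 H = H := by
  ext m; simp [mem_conjSubgroup]

lemma conjSubgroup_inf (g : F) (H K : Subgroup F) :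
    conjSubgroup g (H ⊓ K) = conjSubgroup g H ⊓ conjSubgroup g K := by
  ext m; simp [mem_conjSubgroup]

lemma conjSubgroup_bot (g : F) : conjSubgroup g (⊥ : Subgroup F) = ⊥ := by
  ext m; simp only [mem_conjSubgroup, Subgroup.mem_bot]
  constructor
  · intro h; have := congrArg (fun t => g * t * g⁻¹) h; simpa [mul_assoc] using this
  · rintro rfl; simp

lemma conjSubgroup_eq_iff_mem_normalizer {g : F} {H : Subgroup F} :
    conjSubgroup g H = H ↔ g ∈ Subgroup.normalizer (H : Set F) := by
  rw [Subgroup.mem_normalizer_iff]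
  constructor
  · intro h n
    constructor
    · intro hn; rw [← h]; rw [mem_conjSubgroup]; group; simpa using hn
    · intro hn; rw [← h, mem_conjSubgroup] at hn; group at hn; simpa using hn
  · intro h; ext m
    rw [mem_conjSubgroup, h (g⁻¹ * m * g)]
    constructor
    · intro hm; group at hm ⊢; simpa using hm
    · intro hm; group; simpa using hm

lemma conjSubgroup_eq_conjSubgroup_iff {g g' : F} {H : Subgroup F} :
    conjSubgroup g H = conjSubgroup g' H ↔ g⁻¹ * g' ∈ Subgroup.normalizer (H : Set F) := by
  constructor
  · intro h
    rw [← conjSubgroup_eq_iff_mem_normalizer, ← conjSubgroup_conjSubgroup, ← h,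
      conjSubgroup_conjSubgroup, inv_mul_cancel, conjSubgroup_one]
  · intro h
    have : conjSubgroup (g⁻¹ * g') H = H := conjSubgroup_eq_iff_mem_normalizer.mpr h
    calc conjSubgroup g H = conjSubgroup g (conjSubgroup (g⁻¹ * g') H) := by rw [this]
      _ = conjSubgroup g' H := by rw [conjSubgroup_conjSubgroup, mul_inv_cancel_left]

lemma card_conjSubgroup (g : F) (H : Subgroup F) :
    Nat.card (conjSubgroup g H) = Nat.card H :=
  Nat.card_congr (Subgroup.equivMapOfInjective H _ (MulAut.conj g).injective).symm.toEquiv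

lemma conjSubgroup_centralizer (g y : F) :
    conjSubgroup g (Subgroup.centralizer {y}) = Subgroup.centralizer {g * y * g⁻¹} := by
  ext m
  simp only [mem_conjSubgroup, Subgroup.mem_centralizer_singleton_iff]
  constructor
  · intro h
    have := congrArg (fun t => g * t * g⁻¹) h
    group at this ⊢
    convert this using 1 <;> group
  · intro h
    have := congrArg (fun t => g⁻¹ * t * g) h
    group at this ⊢
    convert this using 1 <;> group

lemma map_conjSubgroup {F' : Type*} [Group F'] (f : F →* F') (g : F) (H : Subgroup F) :
    (conjSubgroup g H).map f = conjSubgroup (f g) (H.map f) := by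
  ext m
  simp only [conjSubgroup, Subgroup.mem_map, MulEquiv.coe_toMonoidHom, MulAut.conj_apply]
  constructor
  · rintro ⟨n, ⟨h, hh, rfl⟩, rfl⟩
    exact ⟨f h, ⟨h, hh, rfl⟩, by simp⟩
  · rintro ⟨n, ⟨h, hh, rfl⟩, rfl⟩
    exact ⟨g * h * g⁻¹, ⟨h, hh, rfl⟩, by simp⟩


section Frob

variable {N H : Subgroup F}

lemma conjSubgroup_of_normal (hN : N.Normal) (g : F) : conjSubgroup g N = N := by
  ext m
  rw [mem_conjSubgroup]
  constructor
  · intro h; have := hN.conj_mem _ h g; group at this ⊢; simpa using this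
  · intro h; simpa using hN.conj_mem _ h g⁻¹

lemma frob_normalizer (hf : IsFrobeniusWithKernel N H) : Subgroup.normalizer (H : Set F) = H := by
  refine le_antisymm ?_ Subgroup.le_normalizer
  intro g hg
  by_contra hgH
  have h1 : conjSubgroup g H = H := conjSubgroup_eq_iff_mem_normalizer.mpr hg
  have h2 := hf.2.2.2.2.2 g hgH
  rw [h1, inf_idem] at h2
  exact hf.2.2.2.2.1 h2

lemma frob_disj_conj (hf : IsFrobeniusWithKernel N H) {g g' : F}
    (h : conjSubgroup g H ≠ conjSubgroup g' H) :
    conjSubgroup g H ⊓ conjSubgroup g' H = ⊥ := by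
  have hne : g⁻¹ * g' ∉ H := fun hmem =>
    h (conjSubgroup_eq_conjSubgroup_iff.mpr (Subgroup.le_normalizer hmem))
  have h2 := hf.2.2.2.2.2 _ hne
  calc conjSubgroup g H ⊓ conjSubgroup g' H
      = conjSubgroup g (H ⊓ conjSubgroup (g⁻¹ * g') H) := by
        rw [conjSubgroup_inf, conjSubgroup_conjSubgroup, mul_inv_cancel_left]
    _ = ⊥ := by rw [h2, conjSubgroup_bot]

lemma frob_kernel_disj_conj (hf : IsFrobeniusWithKernel N H) (g : F) :
    N ⊓ conjSubgroup g H = ⊥ := by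
  calc N ⊓ conjSubgroup g H = conjSubgroup g (N ⊓ H) := by
        rw [conjSubgroup_inf, conjSubgroup_of_normal hf.1]
    _ = ⊥ := by rw [hf.2.1, conjSubgroup_bot]

lemma frob_isComplement' (hf : IsFrobeniusWithKernel N H) : N.IsComplement' H := by
  have := hf.1
  apply Subgroup.isComplement'_of_disjoint_and_mul_eq_univ
  · exact disjoint_iff.mpr hf.2.1
  · rw [← Subgroup.normal_mul N H, hf.2.2.1]; rfl

noncomputable def conjSetEquiv (hn : Subgroup.normalizer (H : Set F) = H) :
    (F ⧸ H) ≃ {S : Subgroup F | ∃ g : F, S = conjSubgroup g H} := by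
  refine Equiv.ofBijective
    (fun q => Quotient.liftOn' q (fun g => (⟨conjSubgroup g H, g, rfl⟩ :
      {S : Subgroup F | ∃ g : F, S = conjSubgroup g H})) ?_) ⟨?_, ?_⟩
  · intro b c hbc
    rw [QuotientGroup.leftRel_apply] at hbc
    exact Subtype.ext (conjSubgroup_eq_conjSubgroup_iff.mpr (hn.symm ▸ Subgroup.le_normalizer hbc))
  · intro q q'
    induction q using Quotient.inductionOn'
    induction q' using Quotient.inductionOn'
    intro h
    apply Quotient.sound'
    rw [QuotientGroup.leftRel_apply]
    have := conjSubgroup_eq_conjSubgroup_iff.mp (congrArg Subtype.val h)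
    rwa [hn] at this
  · rintro ⟨S, g, rfl⟩
    exact ⟨Quotient.mk'' g, rfl⟩

end Frob

section FrobFin

variable [Finite F] {N H : Subgroup F}

lemma frob_card_conjSet (hf : IsFrobeniusWithKernel N H) :
    Nat.card {S : Subgroup F | ∃ g : F, S = conjSubgroup g H} = Nat.card N := by
  rw [← Nat.card_congr (conjSetEquiv (frob_normalizer hf)), ← Subgroup.index_eq_card,
    (frob_isComplement' hf).index_eq_card]

lemma frob_cover (hf : IsFrobeniusWithKernel N H) {q : F} (hq : q ∉ N) :
    ∃ g : F, q ∈ conjSubgroup g H := by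
  classical
  have : Fintype F := Fintype.ofFinite F
  set C : Finset (Subgroup F) := Finset.univ.image (fun g : F => conjSubgroup g H) with hC
  set t : Subgroup F → Finset F := fun S => (S : Set F).toFinset \ {1} with ht
  set U : Finset F := C.biUnion t with hU
  have hdisj : ∀ S ∈ C, ∀ T ∈ C, S ≠ T → Disjoint (t S) (t T) := by
    intro S hS T hT hST
    obtain ⟨g, -, rfl⟩ := Finset.mem_image.mp hS
    obtain ⟨g', -, rfl⟩ := Finset.mem_image.mp hT
    have hbot := frob_disj_conj hf hST
    rw [Finset.disjoint_left]
    intro o ho ho'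
    simp only [ht, Finset.mem_sdiff, Set.mem_toFinset, Finset.mem_singleton] at ho ho'
    have : o ∈ conjSubgroup g H ⊓ conjSubgroup g' H := ⟨ho.1, ho'.1⟩
    rw [hbot, Subgroup.mem_bot] at this
    exact ho.2 this
  have hcardt : ∀ S ∈ C, (t S).card = Nat.card H - 1 := by
    intro S hS
    obtain ⟨g, -, rfl⟩ := Finset.mem_image.mp hS
    have h1 : ({1} : Finset F) ⊆ (conjSubgroup g H : Set F).toFinset := by
      simp only [Finset.singleton_subset_iff, Set.mem_toFinset, SetLike.mem_coe]
      exact Subgroup.one_mem _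
    rw [ht]
    simp only
    rw [Finset.card_sdiff_of_subset h1, Finset.card_singleton, Set.toFinset_card,
      ← Nat.card_eq_fintype_card]
    congr 1
    exact card_conjSubgroup g H
  have hcardC : C.card = Nat.card N := by
    have hCset : (↑C : Set (Subgroup F)) = {S : Subgroup F | ∃ g : F, S = conjSubgroup g H} := by
      ext S; simp [hC, eq_comm]
    rw [← Set.ncard_coe_finset, hCset, ← Nat.card_coe_set_eq]
    exact frob_card_conjSet hf
  have hcardU : U.card = Nat.card N * (Nat.card H - 1) := by
    rw [hU, Finset.card_biUnion hdisj, Finset.sum_congr rfl hcardt, Finset.sum_const,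
      smul_eq_mul, hcardC]
  have hdisjNU : Disjoint ((N : Set F).toFinset) U := by
    rw [Finset.disjoint_left]
    intro o ho hoU
    rw [Set.mem_toFinset] at ho
    obtain ⟨S, hS, hoS⟩ := Finset.mem_biUnion.mp hoU
    obtain ⟨g, -, rfl⟩ := Finset.mem_image.mp hS
    simp only [ht, Finset.mem_sdiff, Set.mem_toFinset, Finset.mem_singleton] at hoS
    have : o ∈ N ⊓ conjSubgroup g H := ⟨ho, hoS.1⟩
    rw [frob_kernel_disj_conj hf, Subgroup.mem_bot] at this
    exact hoS.2 this
  have hcardT : ((N : Set F).toFinset ∪ U).card = Fintype.card F := by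
    rw [Finset.card_union_of_disjoint hdisjNU, hcardU, Set.toFinset_card,
      ← Nat.card_eq_fintype_card, ← Nat.card_eq_fintype_card,
      ← (frob_isComplement' hf).card_mul]
    have h1 : Nat.card ↥((N : Set F)) = Nat.card N := rfl
    rw [h1]
    have hHpos : 0 < Nat.card H := Nat.card_pos
    cases' Nat.exists_eq_add_of_lt hHpos with m hm
    simp only [zero_add] at hm
    rw [hm]
    simp only [Nat.add_sub_cancel]
    ring
  have hT : ((N : Set F).toFinset ∪ U) = Finset.univ := Finset.eq_univ_of_card _ hcardT
  have hqT : q ∈ (N : Set F).toFinset ∪ U := hT ▸ Finset.mem_univ q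
  rcases Finset.mem_union.mp hqT with h | h
  · exact absurd (Set.mem_toFinset.mp h) hq
  · obtain ⟨S, hS, hqS⟩ := Finset.mem_biUnion.mp h
    obtain ⟨g, -, rfl⟩ := Finset.mem_image.mp hS
    simp only [ht, Finset.mem_sdiff, Set.mem_toFinset, Finset.mem_singleton] at hqS
    exact ⟨g, hqS.1⟩

lemma frob_centralizer_le_kernel (hf : IsFrobeniusWithKernel N H) {k : F}
    (hk : k ∈ N) (h1 : k ≠ 1) : Subgroup.centralizer {k} ≤ N := by
  intro c hc
  by_contra hcN
  obtain ⟨g, hg⟩ := frob_cover hf hcN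
  have hck : c * k = k * c := Subgroup.mem_centralizer_singleton_iff.mp hc
  have hc2 : c ∈ conjSubgroup (k * g) H := by
    rw [mem_conjSubgroup] at hg ⊢
    have : (k * g)⁻¹ * c * (k * g) = g⁻¹ * (k⁻¹ * c * k) * g := by group
    rw [this]
    have hkc : k⁻¹ * c * k = c := by
      rw [mul_assoc, hck]; group
    rw [hkc]; exact hg
  have hne : conjSubgroup g H ≠ conjSubgroup (k * g) H := by
    intro heq
    have := conjSubgroup_eq_conjSubgroup_iff.mp heq
    rw [frob_normalizer hf] at this
    have hkN : g⁻¹ * (k * g) ∈ N := by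
      have : g⁻¹ * k * g ∈ N := by
        have := hf.1.conj_mem k hk g⁻¹
        simpa [mul_assoc] using this
      simpa [mul_assoc] using this
    have : g⁻¹ * (k * g) ∈ N ⊓ H := ⟨hkN, this⟩
    rw [hf.2.1, Subgroup.mem_bot] at this
    have h' : g⁻¹ * (k * g) = 1 := this
    have h2 : k * g = g := by
      have := congrArg (g * ·) h'
      simpa [mul_assoc] using this
    have h3 : k = 1 := by
      have := congrArg (· * g⁻¹) h2
      simpa [mul_assoc] using this
    exact h1 h3
  have := frob_disj_conj hf hne
  have hcc : c ∈ conjSubgroup g H ⊓ conjSubgroup (k * g) H := ⟨hg, hc2⟩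
  rw [this, Subgroup.mem_bot] at hcc
  subst hcc
  exact hcN (Subgroup.one_mem N)

end FrobFin

end AuxConj

theorem stmt_13 {G : Type*} [Group G] [Finite G] (a : G)
    (ha : a ∉ Subgroup.center G)
    (hna : nacent G = {⊤, Subgroup.centralizer {a}})
    (hpr : Subgroup.centralizer {a} ≠ (⊤ : Subgroup G))
    (x : G) (hx : x ∉ Subgroup.centralizer ({a} : Set G))
    (hfrob : IsFrobeniusWithKernel
      ((Subgroup.centralizer ({a} : Set G)).map (QuotientGroup.mk' (Subgroup.center G)))
      ((Subgroup.centralizer ({x} : Set G)).map (QuotientGroup.mk' (Subgroup.center G)))) :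
    Nat.card (elemCentralizers G) =
      Nat.card (elemCentralizers ↥(Subgroup.centralizer ({a} : Set G))) +
        Nat.card ((Subgroup.centralizer ({a} : Set G)).map
          (QuotientGroup.mk' (Subgroup.center G))) + 1 := by
  classical
  have hfinsub : Finite (Subgroup G) :=
    Finite.of_injective (fun S : Subgroup G => (S : Set G)) SetLike.coe_injective
  set Z := Subgroup.center G with hZdef
  set π := QuotientGroup.mk' Z with hπdef
  set A := Subgroup.centralizer ({a} : Set G) with hAdef
  set X := Subgroup.centralizer ({x} : Set G) with hXdef
  set K := A.map π with hKdef
  set H' := X.map π with hHdef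
  have hZA : Z ≤ A := Subgroup.center_le_centralizer _
  have hker : π.ker = Z := QuotientGroup.ker_mk' Z
  have hcomap : ∀ S : Subgroup G, Z ≤ S → (S.map π).comap π = S := by
    intro S hS
    rw [Subgroup.comap_map_eq, hker, sup_of_le_left hS]
  have hmem_iff : ∀ (S : Subgroup G), Z ≤ S → ∀ g : G, π g ∈ S.map π ↔ g ∈ S := by
    intro S hS g
    constructor
    · intro h
      have : g ∈ (S.map π).comap π := Subgroup.mem_comap.mpr h
      rwa [hcomap S hS] at this
    · intro h; exact Subgroup.mem_map_of_mem π h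
  have hsurj : Function.Surjective π := QuotientGroup.mk'_surjective Z
  have hne1 : ∀ y : G, y ∉ Z → π y ≠ 1 := by
    intro y hy h
    exact hy (hker ▸ ((MonoidHom.mem_ker (f := π)).mpr h))
  -- centralizers of noncentral elements of A stay in A
  have hF7 : ∀ y : G, y ∈ A → y ∉ Z → Subgroup.centralizer {y} ≤ A := by
    intro y hyA hyZ c hc
    have h1 : π c ∈ Subgroup.centralizer {π y} := by
      rw [Subgroup.mem_centralizer_singleton_iff] at hc ⊢
      rw [← map_mul, ← map_mul, hc]
    have h2 : π y ∈ K := Subgroup.mem_map_of_mem π hyA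
    have h4 := frob_centralizer_le_kernel hfrob h2 (hne1 y hyZ) h1
    exact (hmem_iff A hZA c).mp h4
  -- centralizers of elements outside A are abelian
  have habel : ∀ y : G, y ∉ A → IsMulCommutative (Subgroup.centralizer ({y} : Set G)) := by
    intro y hyA
    by_contra hcomm
    have hmem : Subgroup.centralizer ({y} : Set G) ∈ nacent G := ⟨⟨y, rfl⟩, hcomm⟩
    rw [hna] at hmem
    rcases hmem with h | h
    · have : y ∈ Z := by
        have := Subgroup.centralizer_eq_top_iff_subset.mp h
        exact this rfl
      exact hyA (hZA this)
    · simp only [Set.mem_singleton_iff] at h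
      have hy : y ∈ Subgroup.centralizer ({y} : Set G) :=
        Subgroup.mem_centralizer_singleton_iff.mpr rfl
      rw [h] at hy
      exact hyA hy
  -- conjugates of x are outside A
  have hxg : ∀ g : G, g * x * g⁻¹ ∉ A := by
    intro g hgA
    have h1 : π (g * x * g⁻¹) ∈ K := Subgroup.mem_map_of_mem π hgA
    have h2 := hfrob.1.conj_mem _ h1 (π g)⁻¹
    have h3 : (π g)⁻¹ * π (g * x * g⁻¹) * (π g)⁻¹⁻¹ = π x := by
      simp only [map_mul, map_inv]
      group
    rw [h3] at h2
    exact hx ((hmem_iff A hZA x).mp h2)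
  -- centralizers of elements outside A are conjugates of X
  have hout : ∀ y : G, y ∉ A →
      ∃ g : G, Subgroup.centralizer ({y} : Set G) = conjSubgroup g X := by
    intro y hyA
    have hyK : π y ∉ K := fun h => hyA ((hmem_iff A hZA y).mp h)
    obtain ⟨q, hq⟩ := frob_cover hfrob hyK
    obtain ⟨g, rfl⟩ := hsurj q
    refine ⟨g, ?_⟩
    have hmapc : (conjSubgroup g X).map π = conjSubgroup (π g) H' := map_conjSubgroup π g X
    have hZc : Z ≤ conjSubgroup g X := by
      rw [hXdef, conjSubgroup_centralizer]
      exact Subgroup.center_le_centralizer _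
    have hy2 : y ∈ conjSubgroup g X := (hmem_iff _ hZc y).mp (by rw [hmapc]; exact hq)
    rw [hXdef, conjSubgroup_centralizer] at hy2 ⊢
    set c := g * x * g⁻¹ with hc
    haveI hCab : IsMulCommutative (Subgroup.centralizer ({c} : Set G)) := habel c (hxg g)
    haveI hYab : IsMulCommutative (Subgroup.centralizer ({y} : Set G)) := habel y hyA
    have hcC : c ∈ Subgroup.centralizer ({c} : Set G) :=
      Subgroup.mem_centralizer_singleton_iff.mpr rfl
    apply le_antisymm
    · intro u hu
      have hcy : c * y = y * c :=
        Subgroup.mul_comm_of_mem_isMulCommutative _ hcC hy2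
      have hcmem : c ∈ Subgroup.centralizer ({y} : Set G) :=
        Subgroup.mem_centralizer_singleton_iff.mpr hcy
      exact Subgroup.mem_centralizer_singleton_iff.mpr
        (Subgroup.mul_comm_of_mem_isMulCommutative _ hu hcmem)
    · intro u hu
      exact Subgroup.mem_centralizer_singleton_iff.mpr
        (Subgroup.mul_comm_of_mem_isMulCommutative _ hu hy2)
  -- the three pieces
  set S2 : Set (Subgroup G) :=
    {S | ∃ y : G, y ∈ A ∧ y ∉ Z ∧ S = Subgroup.centralizer {y}} with hS2def
  set S3 : Set (Subgroup G) := {S | ∃ g : G, S = conjSubgroup g X} with hS3def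
  have haA : a ∈ A := Subgroup.mem_centralizer_singleton_iff.mpr rfl
  have hS2leA : ∀ S ∈ S2, S ≤ A := by
    rintro S ⟨y, hyA, hyZ, rfl⟩; exact hF7 y hyA hyZ
  have hS3out : ∀ S ∈ S3, ∃ y : G, y ∉ A ∧ S = Subgroup.centralizer {y} := by
    rintro S ⟨g, rfl⟩
    exact ⟨g * x * g⁻¹, hxg g, by rw [hXdef, conjSubgroup_centralizer]⟩
  have hcover : elemCentralizers G = insert ⊤ (S2 ∪ S3) := by
    ext S
    constructor
    · rintro ⟨y, rfl⟩
      by_cases hyZ : y ∈ Z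
      · exact Set.mem_insert_iff.mpr (Or.inl
          (Subgroup.centralizer_eq_top_iff_subset.mpr (by simpa using hyZ)))
      · by_cases hyA : y ∈ A
        · exact Set.mem_insert_iff.mpr (Or.inr (Or.inl ⟨y, hyA, hyZ, rfl⟩))
        · obtain ⟨g, hg⟩ := hout y hyA
          exact Set.mem_insert_iff.mpr (Or.inr (Or.inr ⟨g, hg⟩))
    · intro hS
      rcases Set.mem_insert_iff.mp hS with rfl | h
      · exact ⟨1, (Subgroup.centralizer_eq_top_iff_subset.mpr
          (Set.singleton_subset_iff.mpr (Subgroup.one_mem _))).symm⟩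
      · rcases h with h2 | h3
        · obtain ⟨y, _, _, rfl⟩ := h2
          exact ⟨y, rfl⟩
        · obtain ⟨y, _, hy⟩ := hS3out S h3
          exact ⟨y, hy⟩
  have htopS : (⊤ : Subgroup G) ∉ S2 ∪ S3 := by
    rintro (h2 | h3)
    · exact hpr (top_le_iff.mp (hS2leA _ h2))
    · obtain ⟨y, hyA, hStop⟩ := hS3out _ h3
      have hyZ : y ∈ Z := Subgroup.centralizer_eq_top_iff_subset.mp hStop.symm rfl
      exact hyA (hZA hyZ)
  have h23 : Disjoint S2 S3 := by
    rw [Set.disjoint_left]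
    rintro S h2 h3
    obtain ⟨y, hyA, hEq⟩ := hS3out S h3
    have hyS : y ∈ S := by
      rw [hEq]; exact Subgroup.mem_centralizer_singleton_iff.mpr rfl
    exact hyA (hS2leA S h2 hyS)
  have hS3card : S3.ncard = Nat.card K := by
    have hZle : ∀ S ∈ S3, Z ≤ S := by
      rintro S ⟨g, rfl⟩
      rw [hXdef, conjSubgroup_centralizer]
      exact Subgroup.center_le_centralizer _
    have hinj : Set.InjOn (fun S : Subgroup G => S.map π) S3 := by
      intro S hS T hT h
      have h2 := congrArg (fun T => Subgroup.comap π T) h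
      simpa [hcomap S (hZle S hS), hcomap T (hZle T hT)] using h2
    have himg : (fun S : Subgroup G => S.map π) '' S3
        = {T : Subgroup (G ⧸ Z) | ∃ q, T = conjSubgroup q H'} := by
      ext T
      constructor
      · rintro ⟨S, ⟨g, rfl⟩, rfl⟩
        exact ⟨π g, map_conjSubgroup π g X⟩
      · rintro ⟨q, rfl⟩
        obtain ⟨g, rfl⟩ := hsurj q
        exact ⟨conjSubgroup g X, ⟨g, rfl⟩, map_conjSubgroup π g X⟩
    rw [← Set.ncard_image_of_injOn hinj, himg, ← Nat.card_coe_set_eq]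
    exact frob_card_conjSet hfrob
  have hS2card : Nat.card (elemCentralizers ↥A) = S2.ncard := by
    have hmapcent : ∀ y : ↥A, (Subgroup.centralizer ({y} : Set ↥A)).map A.subtype
        = Subgroup.centralizer {(y : G)} ⊓ A := by
      intro y
      ext m
      simp only [Subgroup.mem_map, Subgroup.mem_inf,
        Subgroup.mem_centralizer_singleton_iff, Subgroup.coe_subtype]
      constructor
      · rintro ⟨n, hn, rfl⟩
        have := congrArg Subtype.val hn
        push_cast at this
        exact ⟨this, n.2⟩
      · rintro ⟨hcomm, hmA⟩
        exact ⟨⟨m, hmA⟩, Subtype.ext (by push_cast; exact hcomm), rfl⟩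
    have himg : (fun S : Subgroup ↥A => S.map A.subtype) '' elemCentralizers ↥A = S2 := by
      ext S
      constructor
      · rintro ⟨T, ⟨y, rfl⟩, rfl⟩
        beta_reduce
        rw [hmapcent]
        by_cases hyZ : (y : G) ∈ Z
        · have htop : Subgroup.centralizer {(y : G)} = ⊤ :=
            Subgroup.centralizer_eq_top_iff_subset.mpr (by simpa using hyZ)
          rw [htop, top_inf_eq]
          exact ⟨a, haA, ha, hAdef⟩
        · have hle := hF7 (y : G) y.2 hyZ
          rw [inf_eq_left.mpr hle]
          exact ⟨(y : G), y.2, hyZ, rfl⟩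
      · rintro ⟨y, hyA, hyZ, rfl⟩
        refine ⟨Subgroup.centralizer {(⟨y, hyA⟩ : ↥A)}, ⟨⟨y, hyA⟩, rfl⟩, ?_⟩
        beta_reduce
        rw [hmapcent]
        exact inf_eq_left.mpr (hF7 y hyA hyZ)
    have hinj : Function.Injective (fun S : Subgroup ↥A => S.map A.subtype) :=
      Subgroup.map_injective (Subgroup.subtype_injective A)
    rw [Nat.card_coe_set_eq, ← Set.ncard_image_of_injective _ hinj, himg]
  rw [Nat.card_coe_set_eq, hcover,
    Set.ncard_insert_of_notMem htopS (Set.toFinite _),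
    Set.ncard_union_eq h23 (Set.toFinite _) (Set.toFinite _), ← hS2card, hS3card]
end

section
/- Let G be a finite group and a ∈ G \ Z(G) with C(a) non-abelian. Suppose C(a) is a CA-group and G/Z(G) = (C(a)/Z(G)) ⋊ (C(x)/Z(G)) is a Frobenius group with Frobenius kernel C(a)/Z(G) and cyclic Frobenius complement C(x)/Z(G) for some x ∈ G \ C(a). Then nacent(G) = {G, C(a)}. -/
open Subgroup

section Helpers
variable {F : Type*} [Group F]

lemma mem_conjSubgroup_iff {g f : F} {H : Subgroup F} :
    f ∈ conjSubgroup g H ↔ ∃ h ∈ H, g * h * g⁻¹ = f := by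
  simp [conjSubgroup, Subgroup.mem_map, MulAut.conj_apply]

lemma mem_of_conj {H : Subgroup F} (hmal : ∀ g : F, g ∉ H → H ⊓ conjSubgroup g H = ⊥)
    {t y : F} (hy : y ∈ H) (hy1 : y ≠ 1) (hyc : y ∈ conjSubgroup t H) : t ∈ H := by
  by_contra ht
  have hmem : y ∈ H ⊓ conjSubgroup t H := ⟨hy, hyc⟩
  rw [hmal t ht] at hmem
  exact hy1 (Subgroup.mem_bot.mp hmem)

lemma mem_conj_of_commute {H : Subgroup F} (hmal : ∀ g : F, g ∉ H → H ⊓ conjSubgroup g H = ⊥)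
    {g f c : F} (hf : f ∈ conjSubgroup g H) (hf1 : f ≠ 1) (hc : c * f = f * c) :
    c ∈ conjSubgroup g H := by
  obtain ⟨h, hh, hhe⟩ := mem_conjSubgroup_iff.mp hf
  have hne : h ≠ 1 := by rintro rfl; simp at hhe; exact hf1 hhe.symm
  have key : h ∈ conjSubgroup (g⁻¹ * c * g) H := by
    refine mem_conjSubgroup_iff.mpr ⟨h, hh, ?_⟩
    have h1 : c * (g * h * g⁻¹) = (g * h * g⁻¹) * c := by rw [hhe]; exact hc
    calc g⁻¹ * c * g * h * (g⁻¹ * c * g)⁻¹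
        = g⁻¹ * (c * (g * h * g⁻¹)) * c⁻¹ * g := by group
      _ = g⁻¹ * ((g * h * g⁻¹) * c) * c⁻¹ * g := by rw [h1]
      _ = h := by group
  have := mem_of_conj hmal hh hne key
  refine mem_conjSubgroup_iff.mpr ⟨g⁻¹ * c * g, this, by group⟩
end Helpers

lemma frobenius_cover {F : Type*} [Group F] [Finite F] {N H : Subgroup F}
    (hN : N.Normal) (hdisj : N ⊓ H = ⊥) (hsup : N ⊔ H = ⊤)
    (hmal : ∀ g : F, g ∉ H → H ⊓ conjSubgroup g H = ⊥) :
    ∀ f : F, f ∉ N → ∃ g : F, f ∈ conjSubgroup g H := by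
  classical
  haveI := hN
  have hcompl : Subgroup.IsComplement' N H := by
    apply Subgroup.isComplement'_of_disjoint_and_mul_eq_univ (disjoint_iff.mpr hdisj)
    rw [← Subgroup.normal_mul, hsup, Subgroup.coe_top]
  have hm : Nat.card N * Nat.card H = Nat.card F := hcompl.card_mul
  have hq : Nat.card F = Nat.card (F ⧸ H) * Nat.card H :=
    Subgroup.card_eq_card_quotient_mul_card_subgroup H
  -- the map
  set Ψ : (F ⧸ H) × {y : ↥H // y ≠ 1} → {f : F // f ∉ N} := fun p =>
    ⟨p.1.out * (p.2.1 : F) * p.1.out⁻¹, by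
      intro hmem
      have hy : (p.2.1 : F) ∈ N := by
        have := hN.conj_mem _ hmem p.1.out⁻¹
        simpa [mul_assoc] using this
      have : (p.2.1 : F) ∈ N ⊓ H := ⟨hy, p.2.1.2⟩
      rw [hdisj] at this
      exact p.2.2 (Subtype.ext (Subgroup.mem_bot.mp this))⟩ with hΨ
  have hinj : Function.Injective Ψ := by
    rintro ⟨q1, y1⟩ ⟨q2, y2⟩ hpe
    have heq : q1.out * (y1.1 : F) * q1.out⁻¹ = q2.out * (y2.1 : F) * q2.out⁻¹ :=
      congrArg Subtype.val hpe
    set g1 := q1.out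
    set g2 := q2.out
    have hyconj : (y1.1 : F) = (g1⁻¹ * g2) * (y2.1 : F) * (g1⁻¹ * g2)⁻¹ := by
      have := heq
      calc (y1.1 : F) = g1⁻¹ * (g1 * (y1.1:F) * g1⁻¹) * g1 := by group
        _ = g1⁻¹ * (g2 * (y2.1:F) * g2⁻¹) * g1 := by rw [heq]
        _ = (g1⁻¹ * g2) * (y2.1 : F) * (g1⁻¹ * g2)⁻¹ := by group
    have hy1ne : (y1.1 : F) ≠ 1 := fun h => y1.2 (Subtype.ext h)
    have htH : g1⁻¹ * g2 ∈ H := by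
      apply mem_of_conj hmal y1.1.2 hy1ne
      exact mem_conjSubgroup_iff.mpr ⟨(y2.1 : F), y2.1.2, hyconj.symm⟩
    have hqeq : q1 = q2 := by
      rw [← QuotientGroup.out_eq' q1, ← QuotientGroup.out_eq' q2]
      exact (QuotientGroup.eq (s := H)).mpr htH
    subst hqeq
    have : (y1.1 : F) = (y2.1 : F) := by
      have hgg : g1 = g2 := rfl
      rw [hgg] at heq
      exact mul_left_cancel (mul_right_cancel heq)
    exact Prod.ext rfl (Subtype.ext (Subtype.ext this))
  have hcard : Nat.card ((F ⧸ H) × {y : ↥H // y ≠ 1}) = Nat.card {f : F // f ∉ N} := by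
    letI : Fintype F := Fintype.ofFinite F
    rw [Nat.card_prod]
    simp only [Nat.card_eq_fintype_card]
    have c1 : Fintype.card {y : ↥H // y ≠ 1} = Fintype.card ↥H - 1 := by
      rw [Fintype.card_subtype_compl (· = 1), Fintype.card_subtype_eq]
    have c2 : Fintype.card {f : F // f ∉ N} = Fintype.card F - Fintype.card ↥N := by
      rw [Fintype.card_subtype_compl (· ∈ N)]
    rw [c1, c2]
    -- arithmetic
    set n := Fintype.card ↥N
    set h := Fintype.card ↥H
    set m := Fintype.card F
    set q := Fintype.card (F ⧸ H)
    have hm' : n * h = m := by simpa [Nat.card_eq_fintype_card] using hm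
    have hq' : m = q * h := by simpa [Nat.card_eq_fintype_card] using hq
    have hpos : 0 < h := Fintype.card_pos
    have hqn : q = n := Nat.eq_of_mul_eq_mul_right hpos (by rw [← hq', hm'])
    have key : q * (h - 1) + q = m := by
      have h2 : q * (h - 1) + q * 1 = q * ((h - 1) + 1) := by ring
      rw [mul_one] at h2
      rw [h2, Nat.sub_add_cancel hpos, ← hq']
    omega
  have hbij : Function.Bijective Ψ := (Nat.bijective_iff_injective_and_card Ψ).mpr ⟨hinj, hcard⟩
  intro f hf
  obtain ⟨⟨q, y⟩, he⟩ := hbij.2 ⟨f, hf⟩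
  refine ⟨q.out, mem_conjSubgroup_iff.mpr ⟨(y.1 : F), y.1.2, ?_⟩⟩
  exact congrArg Subtype.val he

lemma mem_kernel_of_commute {F : Type*} [Group F] [Finite F] {N H : Subgroup F}
    (hN : N.Normal) (hdisj : N ⊓ H = ⊥) (hsup : N ⊔ H = ⊤)
    (hmal : ∀ g : F, g ∉ H → H ⊓ conjSubgroup g H = ⊥)
    {n c : F} (hn : n ∈ N) (hn1 : n ≠ 1) (hc : c * n = n * c) : c ∈ N := by
  by_contra hcN
  obtain ⟨g, hgc⟩ := frobenius_cover hN hdisj hsup hmal c hcN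
  have hc1 : c ≠ 1 := fun h => hcN (h ▸ N.one_mem)
  have hnc : n ∈ conjSubgroup g H :=
    mem_conj_of_commute hmal hgc hc1 (by rw [hc])
  obtain ⟨h, hh, hhe⟩ := mem_conjSubgroup_iff.mp hnc
  have hhN : h ∈ N := by
    have : g⁻¹ * n * g ∈ N := by simpa [mul_assoc] using hN.conj_mem n hn g⁻¹
    have he : g⁻¹ * n * g = h := by rw [← hhe]; group
    rwa [he] at this
  have : h ∈ N ⊓ H := ⟨hhN, hh⟩
  rw [hdisj] at this
  rw [Subgroup.mem_bot.mp this] at hhe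
  simp at hhe
  exact hn1 hhe.symm

lemma isCommutative_of_le {G : Type*} [Group G] {K L : Subgroup G} (h : K ≤ L)
    (hL : IsMulCommutative L) : IsMulCommutative K := by
  refine ⟨⟨fun u v => ?_⟩⟩
  have := congrArg Subtype.val (hL.is_comm.comm ⟨u.1, h u.2⟩ ⟨v.1, h v.2⟩)
  exact Subtype.ext (by simpa using this)

lemma conjSubgroup_cyclic {F : Type*} [Group F] {H : Subgroup F} (g : F)
    (hcyc : IsCyclic ↥H) : IsCyclic ↥(conjSubgroup g H) := by
  have e := Subgroup.equivMapOfInjective H (MulAut.conj g).toMonoidHom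
    (MulAut.conj g).injective
  exact isCyclic_of_surjective e.toMonoidHom e.surjective


theorem stmt_16 {G : Type*} [Group G] [Finite G] (a : G)
    (ha : a ∉ Subgroup.center G)
    (hnab : ¬ IsMulCommutative (Subgroup.centralizer ({a} : Set G)))
    (hCA : IsCAGroup ↥(Subgroup.centralizer ({a} : Set G)))
    (x : G) (hx : x ∉ Subgroup.centralizer ({a} : Set G))
    (hfrob : IsFrobeniusWithKernel
      ((Subgroup.centralizer ({a} : Set G)).map (QuotientGroup.mk' (Subgroup.center G)))
      ((Subgroup.centralizer ({x} : Set G)).map (QuotientGroup.mk' (Subgroup.center G))))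
    (hcyc : IsCyclic ↥((Subgroup.centralizer ({x} : Set G)).map
      (QuotientGroup.mk' (Subgroup.center G)))) :
    nacent G = {⊤, Subgroup.centralizer {a}} := by
  classical
  obtain ⟨hN, hdisj, hsup, -, -, hmal⟩ := hfrob
  set π := QuotientGroup.mk' (Subgroup.center G) with hπ
  set N := (Subgroup.centralizer ({a} : Set G)).map π with hNdef
  set Hc := (Subgroup.centralizer ({x} : Set G)).map π with hHdef
  have hpre : Subgroup.comap π N = Subgroup.centralizer ({a} : Set G) := by
    rw [hNdef, Subgroup.comap_map_eq, QuotientGroup.ker_mk',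
      sup_eq_left.mpr (Subgroup.center_le_centralizer ({a} : Set G))]
  ext K
  simp only [nacent, elemCentralizers, Set.mem_setOf_eq, Set.mem_insert_iff,
    Set.mem_singleton_iff]
  constructor
  · rintro ⟨⟨b, rfl⟩, hKnab⟩
    by_cases hbZ : b ∈ Subgroup.center G
    · left
      rw [Subgroup.centralizer_eq_top_iff_subset]
      simpa using hbZ
    · have hb1 : π b ≠ 1 := by
        simpa [hπ, QuotientGroup.eq_one_iff] using hbZ
      by_cases hbN : π b ∈ N
      · right
        have hbCa : b ∈ Subgroup.centralizer ({a} : Set G) := by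
          rw [← hpre]; exact hbN
        have hsub : Subgroup.centralizer ({b} : Set G) ≤ Subgroup.centralizer ({a} : Set G) := by
          intro c hc
          have hcb : c * b = b * c := Subgroup.mem_centralizer_singleton_iff.mp hc
          have hcomm : π c * π b = π b * π c := by rw [← map_mul, ← map_mul, hcb]
          have : π c ∈ N := mem_kernel_of_commute hN hdisj hsup hmal hbN hb1 hcomm
          rw [← hpre]; exact this
        have hbc : (⟨b, hbCa⟩ : ↥(Subgroup.centralizer ({a} : Set G))) ∈
            Subgroup.center ↥(Subgroup.centralizer ({a} : Set G)) := by
          by_contra hnc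
          have hcom := hCA _ hnc
          apply hKnab
          refine ⟨⟨fun u v => ?_⟩⟩
          have hu : (u : G) ∈ Subgroup.centralizer ({a} : Set G) := hsub u.2
          have hv : (v : G) ∈ Subgroup.centralizer ({a} : Set G) := hsub v.2
          have hum : (⟨(u : G), hu⟩ : ↥(Subgroup.centralizer ({a} : Set G))) ∈
              Subgroup.centralizer {(⟨b, hbCa⟩ : ↥(Subgroup.centralizer ({a} : Set G)))} := by
            rw [Subgroup.mem_centralizer_singleton_iff]
            exact Subtype.ext (Subgroup.mem_centralizer_singleton_iff.mp u.2)
          have hvm : (⟨(v : G), hv⟩ : ↥(Subgroup.centralizer ({a} : Set G))) ∈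
              Subgroup.centralizer {(⟨b, hbCa⟩ : ↥(Subgroup.centralizer ({a} : Set G)))} := by
            rw [Subgroup.mem_centralizer_singleton_iff]
            exact Subtype.ext (Subgroup.mem_centralizer_singleton_iff.mp v.2)
          have := congrArg Subtype.val (congrArg Subtype.val
            (hcom.is_comm.comm ⟨_, hum⟩ ⟨_, hvm⟩))
          exact Subtype.ext (by simpa using this)
        have hsup2 : Subgroup.centralizer ({a} : Set G) ≤ Subgroup.centralizer ({b} : Set G) := by
          intro c hc
          rw [Subgroup.mem_centralizer_singleton_iff]
          have := Subgroup.mem_center_iff.mp hbc ⟨c, hc⟩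
          exact congrArg Subtype.val this
        exact le_antisymm hsub hsup2
      · exfalso
        obtain ⟨g, hg⟩ := frobenius_cover hN hdisj hsup hmal (π b) hbN
        haveI hcyc' : IsCyclic ↥(conjSubgroup g Hc) := conjSubgroup_cyclic g hcyc
        have hmem : ∀ c : ↥(Subgroup.centralizer ({b} : Set G)),
            π (c : G) ∈ conjSubgroup g Hc := by
          intro c
          have hcb : (c : G) * b = b * (c : G) :=
            Subgroup.mem_centralizer_singleton_iff.mp c.2
          refine mem_conj_of_commute hmal hg hb1 ?_
          rw [← map_mul, ← map_mul, hcb]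
        set f : ↥(Subgroup.centralizer ({b} : Set G)) →* ↥(conjSubgroup g Hc) :=
          (π.comp (Subgroup.centralizer ({b} : Set G)).subtype).codRestrict _ hmem with hf
        have hker : f.ker ≤ Subgroup.center ↥(Subgroup.centralizer ({b} : Set G)) := by
          intro k hk
          have hk1 : π (k : G) = 1 := by
            have := congrArg Subtype.val (hk : f k = 1)
            exact this
          have hkZ : (k : G) ∈ Subgroup.center G := by
            rw [hπ, QuotientGroup.mk'_apply] at hk1
            exact (QuotientGroup.eq_one_iff _).mp hk1
          rw [Subgroup.mem_center_iff]
          intro u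
          exact Subtype.ext ((Subgroup.mem_center_iff.mp hkZ (u : G)))
        apply hKnab
        exact ⟨⟨fun u v => commutative_of_cyclic_center_quotient f hker u v⟩⟩
  · rintro (rfl | rfl)
    · constructor
      · exact ⟨1, (Subgroup.centralizer_eq_top_iff_subset.mpr (Set.singleton_subset_iff.mpr (Subgroup.center G).one_mem)).symm⟩
      · intro htop
        exact hnab (isCommutative_of_le le_top htop)
    · exact ⟨⟨a, rfl⟩, hnab⟩
end
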